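/- The series of H(k)/(k(k+2)) over positive integers k converges to (1 + ζ(2))/2. -/

import Mathlib

open scoped BigOperators

/-- The harmonic number `H k = ∑_{j=1}^k 1/j`. -/
noncomputable def H (k : ℕ) : ℝ := ∑ j ∈ Finset.Icc 1 k, (1 : ℝ) / j

/-- The generalized harmonic number `H^{(p)} k = ∑_{j=1}^k 1/j^p`. -/
noncomputable def Hgen (p k : ℕ) : ℝ := ∑ j ∈ Finset.Icc 1 k, (1 : ℝ) / (j : ℝ) ^ p

lemma H_zero : H 0 = 0 := by simp [H]

lemma H_succ (k : ℕ) : H (k + 1) = H k + 1 / (k + 1) := by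
  rw [H, H, Finset.sum_Icc_succ_top (by omega)]
  push_cast; ring

lemma Hgen2_zero : Hgen 2 0 = 0 := by simp [Hgen]

lemma Hgen2_succ (k : ℕ) : Hgen 2 (k + 1) = Hgen 2 k + 1 / ((k : ℝ) + 1) ^ 2 := by
  rw [Hgen, Hgen, Finset.sum_Icc_succ_top (by omega)]
  push_cast; ring

lemma H_eq_range (n : ℕ) : H n = ∑ i ∈ Finset.range n, (1 : ℝ) / (i + 1) := by
  induction n with
  | zero => simp [H_zero]
  | succ n ih => rw [H_succ, Finset.sum_range_succ, ih]

lemma Hgen2_eq_range (n : ℕ) : Hgen 2 n = ∑ i ∈ Finset.range (n + 1), (1 : ℝ) / (i : ℝ) ^ 2 := by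
  induction n with
  | zero => simp [Hgen2_zero]
  | succ n ih => rw [Hgen2_succ, Finset.sum_range_succ, ih]; push_cast; try ring

lemma H_nonneg (n : ℕ) : 0 ≤ H n := by
  rw [H]; positivity

lemma partial_sum (N : ℕ) :
    ∑ n ∈ Finset.range N, H (n + 1) / (((n : ℝ) + 1) * ((n : ℝ) + 3)) =
      (1 + Hgen 2 (N + 2) - H (N + 1) / ((N : ℝ) + 1) - H (N + 2) / ((N : ℝ) + 2)
        - 1 / ((N : ℝ) + 2)) / 2 := by
  induction N with
  | zero =>
      norm_num [H_succ, H_zero, Hgen2_succ, Hgen2_zero]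
  | succ N ih =>
      rw [Finset.sum_range_succ, ih]
      have h1 : H (N + 1 + 1) = H (N + 1) + 1 / ((N : ℝ) + 2) := by
        rw [H_succ]; push_cast; ring_nf
      have h2 : H (N + 1 + 2) = H (N + 1) + 1 / ((N : ℝ) + 2) + 1 / ((N : ℝ) + 3) := by
        show H (N + 2 + 1) = _
        rw [H_succ, h1]; push_cast; ring_nf
      have h3 : Hgen 2 (N + 1 + 2) = Hgen 2 (N + 2) + 1 / ((N : ℝ) + 3) ^ 2 := by
        show Hgen 2 (N + 2 + 1) = _
        rw [Hgen2_succ]; push_cast; ring_nf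
      rw [h1, h2, h3]
      have e1 : ((N : ℝ) + 1) ≠ 0 := by positivity
      have e2 : ((N : ℝ) + 2) ≠ 0 := by positivity
      have e3 : ((N : ℝ) + 3) ≠ 0 := by positivity
      push_cast
      field_simp
      ring

open Filter Topology Real in
lemma real_hasSum :
    HasSum (fun k : ℕ => H (k + 1) / (((k : ℝ) + 1) * ((k : ℝ) + 3)))
      ((1 + π ^ 2 / 6) / 2) := by
  have hnonneg : ∀ k : ℕ, 0 ≤ H (k + 1) / (((k : ℝ) + 1) * ((k : ℝ) + 3)) := by
    intro k
    have := H_nonneg (k + 1)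
    positivity
  rw [hasSum_iff_tendsto_nat_of_nonneg hnonneg]
  have hHn : Tendsto (fun n : ℕ => H n / n) atTop (𝓝 0) := by
    have hc := tendsto_one_div_add_atTop_nhds_zero_nat.cesaro
    refine hc.congr fun n => ?_
    rw [H_eq_range]
    ring
  have hH1 : Tendsto (fun N : ℕ => H (N + 1) / ((N : ℝ) + 1)) atTop (𝓝 0) := by
    have := hHn.comp (tendsto_add_atTop_nat 1)
    refine this.congr fun n => ?_
    simp [Function.comp]
  have hH2 : Tendsto (fun N : ℕ => H (N + 2) / ((N : ℝ) + 2)) atTop (𝓝 0) := by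
    have := hHn.comp (tendsto_add_atTop_nat 2)
    refine this.congr fun n => ?_
    simp [Function.comp]
  have hG : Tendsto (fun N : ℕ => Hgen 2 (N + 2)) atTop (𝓝 (π ^ 2 / 6)) := by
    have hb := hasSum_zeta_two.tendsto_sum_nat
    have := hb.comp (tendsto_add_atTop_nat 3)
    refine this.congr fun n => ?_
    rw [Hgen2_eq_range]
    rfl
  have hinv : Tendsto (fun N : ℕ => 1 / ((N : ℝ) + 2)) atTop (𝓝 0) := by
    have := (tendsto_one_div_add_atTop_nhds_zero_nat (𝕜 := ℝ)).comp (tendsto_add_atTop_nat 1)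
    refine this.congr fun n => ?_
    simp only [Function.comp]
    push_cast
    ring_nf
  have : Tendsto (fun N : ℕ =>
      (1 + Hgen 2 (N + 2) - H (N + 1) / ((N : ℝ) + 1) - H (N + 2) / ((N : ℝ) + 2)
        - 1 / ((N : ℝ) + 2)) / 2) atTop (𝓝 ((1 + π ^ 2 / 6 - 0 - 0 - 0) / 2)) :=
    ((((tendsto_const_nhds.add hG).sub hH1).sub hH2).sub hinv).div_const 2
  simp only [sub_zero] at this
  refine this.congr fun N => ?_
  rw [partial_sum]

theorem euler_sum_8 :
    HasSum (fun k : ℕ => (H (k+1) : ℂ) / (((k : ℂ) + 1) * ((k : ℂ) + 3))) ((1 + riemannZeta 2) / 2) := by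
  have h := Complex.hasSum_ofReal.mpr real_hasSum
  rw [riemannZeta_two]
  convert h using 1
  · funext k
    push_cast
    ring
  · push_cast
    ring
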